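/- Let R be a commutative ring and S a multiplicative subset. The following are equivalent: (1) every free R-module is u-S-semisimple; (2) every R-module is u-S-semisimple; (3) every short exact sequence of R-modules is u-S-split; (4) Ext¹_R(M, N) is u-S-torsion for all R-modules M, N; (5) every R-module is u-S-projective; (6) every R-module is u-S-injective. -/

import Mathlib

open CategoryTheory

universe u

def IsUSTorsionMod {R : Type u} [CommRing R] (S : Submonoid R) (X : ModuleCat.{u} R) : Prop :=
  ∃ s ∈ S, ∀ x : X, s • x = 0

def IsUSTorsion {R : Type u} [CommRing R] (S : Submonoid R) (T : Type u)
    [AddCommGroup T] [Module R T] : Prop :=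
  ∃ s ∈ S, ∀ x : T, s • x = 0

noncomputable def ext (R : Type u) [CommRing R] (n : ℕ) (P M : ModuleCat.{u} R) :
    ModuleCat.{u} R :=
  ((Ext R (ModuleCat.{u} R) n).obj (Opposite.op P)).obj M

def IsUSProjective {R : Type u} [CommRing R] (S : Submonoid R) (P : Type u)
    [AddCommGroup P] [Module R P] : Prop :=
  ∀ M : ModuleCat.{u} R, IsUSTorsionMod S (ext R 1 (ModuleCat.of R P) M)

def IsUSInjective {R : Type u} [CommRing R] (S : Submonoid R) (E : Type u)
    [AddCommGroup E] [Module R E] : Prop :=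
  ∀ M : ModuleCat.{u} R, IsUSTorsionMod S (ext R 1 M (ModuleCat.of R E))


/-- `M` is `u`-`S`-semisimple: every short exact sequence with middle term `M` is
`u`-`S`-split. -/
def IsUSSemisimple {R : Type u} [CommRing R] (S : Submonoid R)
    (M : Type u) [AddCommGroup M] [Module R M] : Prop :=
  ∀ (L N : Type u) [AddCommGroup L] [Module R L] [AddCommGroup N] [Module R N]
    (f : L →ₗ[R] M) (g : M →ₗ[R] N),
    Function.Injective f → Function.Surjective g →
    LinearMap.range f = LinearMap.ker g →
    ∃ s ∈ S, ∃ f' : M →ₗ[R] L, ∀ a : L, f' (f a) = s • a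

namespace USSAux

open CategoryTheory Limits Category

noncomputable section

set_option linter.unusedSectionVars false

section Res
variable {C : Type*} [Category C] [Abelian C] [EnoughProjectives C]
open Projective
variable {Z P0 : C} [Projective P0] (π' : P0 ⟶ Z)

/-- a projective resolution complex starting from a chosen epi from a projective object -/
def ofComplex' : ChainComplex C ℕ :=
  ChainComplex.mk' P0 (Projective.syzygies π') (Projective.d π')
    (fun f => ⟨_, Projective.d f, show Projective.d f ≫ f = 0 from (assoc _ _ _).trans ((whisker_eq _ (kernel.condition f)).trans comp_zero)⟩)

lemma ofComplex'_d_1_0 :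
    (ofComplex' π').d 1 0 = d π' := by
  simp [ofComplex']

lemma ofComplex'_exactAt_succ (n : ℕ) :
    (ofComplex' π').ExactAt (n + 1) := by
  rw [HomologicalComplex.exactAt_iff' _ (n + 1 + 1) (n + 1) n (by simp) (by simp)]
  refine (ShortComplex.exact_iff_of_iso ?_).2 (exact_d_f ((ofComplex' π').d (n + 1) n))
  exact ShortComplex.isoMk (ChainComplex.mk'XIso P0 (Projective.syzygies π') (Projective.d π')
      (fun f => ⟨_, Projective.d f, show Projective.d f ≫ f = 0 from (assoc _ _ _).trans ((whisker_eq _ (kernel.condition f)).trans comp_zero)⟩) n) (Iso.refl _) (Iso.refl _)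
    ((ChainComplex.mk'_d P0 (Projective.syzygies π') (Projective.d π')
      (fun f => ⟨_, Projective.d f, show Projective.d f ≫ f = 0 from (assoc _ _ _).trans ((whisker_eq _ (kernel.condition f)).trans comp_zero)⟩) n).symm.trans (comp_id _).symm) ((id_comp _).trans (comp_id _).symm)

instance (n : ℕ) : Projective ((ofComplex' π').X n) := by
  rcases n with (_ | _ | _ | n)
  · exact ‹Projective P0›
  all_goals apply Projective.projective_over

/-- The projective resolution built from a chosen epi `π' : P0 ⟶ Z`. -/
def of' [Epi π'] : ProjectiveResolution Z where
  complex := ofComplex' π'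
  π := (ChainComplex.toSingle₀Equiv _ _).symm ⟨π', by
          rw [ofComplex'_d_1_0]; exact show (π (kernel π') ≫ kernel.ι π') ≫ π' = 0 by rw [assoc, kernel.condition, comp_zero]⟩
  quasiIso := ⟨fun n => by
    cases n
    · rw [ChainComplex.quasiIsoAt₀_iff, ShortComplex.quasiIso_iff_of_zeros']
      · refine (ShortComplex.exact_and_epi_g_iff_of_iso ?_).2
          ⟨exact_d_f π', by dsimp; infer_instance⟩
        exact ShortComplex.isoMk (Iso.refl _) (Iso.refl _) (Iso.refl _)
          (by simp [ofComplex']; exact (Category.id_comp _).trans (Category.comp_id _).symm) (by refine (Category.id_comp _).trans ?_; refine Eq.trans ?_ (Category.comp_id _).symm; exact (ChainComplex.toSingle₀Equiv_symm_apply_f_zero (C := ofComplex' π') π' _).symm)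
      all_goals rfl
    · rw [quasiIsoAt_iff_exactAt']
      · apply ofComplex'_exactAt_succ
      · apply ChainComplex.exactAt_succ_single_obj⟩

lemma of'_π_f_0 [Epi π'] : (of' π').π.f 0 = π' := by
  simp [of', ChainComplex.toSingle₀Equiv_symm_apply_f_zero]
  exact ChainComplex.toSingle₀Equiv_symm_apply_f_zero _ _

end Res

variable {R : Type u} [CommRing R]

/-- Factoring a linear map through a surjection whose kernel it kills. -/
lemma exists_factor {A B N : Type u} [AddCommGroup A] [Module R A] [AddCommGroup B] [Module R B]
    [AddCommGroup N] [Module R N] (p : A →ₗ[R] B) (g : A →ₗ[R] N)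
    (hp : Function.Surjective p) (hk : LinearMap.ker p ≤ LinearMap.ker g) :
    ∃ h : B →ₗ[R] N, ∀ a, h (p a) = g a := by
  refine ⟨((LinearMap.ker p).liftQ g hk).comp
    (p.quotKerEquivOfSurjective hp).symm.toLinearMap, fun a => ?_⟩
  have h1 : (p.quotKerEquivOfSurjective hp).symm (p a) = Submodule.Quotient.mk a := by
    apply (p.quotKerEquivOfSurjective hp).injective
    rw [LinearEquiv.apply_symm_apply]
    simp [LinearMap.quotKerEquivOfSurjective, LinearMap.quotKerEquivRange_apply_mk]
  simp [h1]

lemma torsion_of_iso {X Y : ModuleCat.{u} R} (e : X ≅ Y) (s : R)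
    (h : ∀ y : Y, s • y = 0) : ∀ x : X, s • x = 0 := by
  intro x
  have hinj : Function.Injective e.hom := fun a b hab => by
    rw [← Iso.hom_inv_id_apply e a, ← Iso.hom_inv_id_apply e b]
    exact congrArg e.inv hab
  apply hinj
  rw [map_smul, h, map_zero]

/-- The explicit short complex `Hom(X0, N) → Hom(X1, N) → Hom(X2, N)`. -/
def homSC {M : ModuleCat.{u} R} (P : ProjectiveResolution M) (N : ModuleCat.{u} R) :
    ShortComplex (ModuleCat.{u} R) :=
  (P.complex.linearYonedaObj R N).sc' 0 1 2

/-- `ext R 1 M N` is the homology of the explicit short complex. -/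
def extIso {M : ModuleCat.{u} R} (P : ProjectiveResolution M) (N : ModuleCat.{u} R) :
    ext R 1 M N ≅ (homSC P N).moduleCatLeftHomologyData.H :=
  P.isoExt 1 N ≪≫
    ShortComplex.homologyMapIso
      ((P.complex.linearYonedaObj R N).isoSc' 0 1 2 (by simp) (by simp)) ≪≫
    (homSC P N).moduleCatHomologyIso

lemma homSC_g_apply {M : ModuleCat.{u} R} (P : ProjectiveResolution M) (N : ModuleCat.{u} R)
    (φ : P.complex.X 1 ⟶ N) :
    (homSC P N).g.hom φ = P.complex.d 2 1 ≫ φ := by simp [homSC]; rfl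

lemma homSC_f_apply {M : ModuleCat.{u} R} (P : ProjectiveResolution M) (N : ModuleCat.{u} R)
    (φ : P.complex.X 0 ⟶ N) :
    (homSC P N).f.hom φ = P.complex.d 1 0 ≫ φ := by simp [homSC]; rfl


variable (S : Submonoid R)

/-- (3) ⇒ (4): if every short exact sequence is u-S-split then Ext¹ is u-S-torsion. -/
lemma ext_torsion_of_split
    (h3 : ∀ (A B C : Type u) [AddCommGroup A] [Module R A] [AddCommGroup B] [Module R B]
      [AddCommGroup C] [Module R C] (f : A →ₗ[R] B) (g : B →ₗ[R] C),
      Function.Injective f → Function.Surjective g →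
      LinearMap.range f = LinearMap.ker g →
      ∃ s ∈ S, ∃ f' : B →ₗ[R] A, ∀ a : A, f' (f a) = s • a)
    (M N : ModuleCat.{u} R) : ∃ s ∈ S, ∀ x : ext R 1 M N, s • x = 0 := by
  obtain ⟨P⟩ : Nonempty (ProjectiveResolution M) := HasProjectiveResolution.out
  set d10 : P.complex.X 1 →ₗ[R] P.complex.X 0 := (P.complex.d 1 0).hom with hd10def
  set π0 : P.complex.X 0 →ₗ[R] M := (P.π.f 0).hom with hπ0def
  have hrk : LinearMap.range d10 = LinearMap.ker π0 := P.exact₀.moduleCat_range_eq_ker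
  have hπ : Function.Surjective π0 := by
    exact (ModuleCat.epi_iff_surjective (P.π.f 0)).1 inferInstance
  obtain ⟨s, hs, f', hf'⟩ := h3 (LinearMap.ker π0) (P.complex.X 0) M
    (LinearMap.ker π0).subtype π0 (Submodule.injective_subtype _) hπ
    (Submodule.range_subtype _)
  refine ⟨s, hs, ?_⟩
  apply torsion_of_iso (extIso P N) s
  intro z
  obtain ⟨⟨g₁, hg₁⟩, rfl⟩ := Submodule.Quotient.mk_surjective _ z
  let g₂ : P.complex.X 1 ⟶ N := g₁
  -- g₁ is a cocycle : it vanishes on the image of d 2 1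
  have hco : ∀ x, g₂ (P.complex.d 2 1 x) = 0 := by
    intro x
    have h0 : (homSC P N).g.hom g₂ = 0 := hg₁
    rw [homSC_g_apply] at h0
    exact ConcreteCategory.congr_hom h0 x
  have hrk2 : LinearMap.range (P.complex.d 2 1).hom = LinearMap.ker d10 :=
    (P.exact_succ 0).moduleCat_range_eq_ker
  have hker : LinearMap.ker (d10 : _ →ₗ[R] _) ≤ LinearMap.ker g₂.hom := by
    rw [← hrk2]; rintro _ ⟨x, rfl⟩; exact hco x
  -- corestriction of d10 onto ker π0
  let p : P.complex.X 1 →ₗ[R] LinearMap.ker π0 :=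
    LinearMap.codRestrict (LinearMap.ker π0) d10
      (fun x => hrk ▸ LinearMap.mem_range_self d10 x)
  have hpsurj : Function.Surjective p := by
    rintro ⟨b, hb⟩
    rw [← hrk] at hb
    obtain ⟨x, hx⟩ := hb
    exact ⟨x, Subtype.ext hx⟩
  obtain ⟨gbar, hgbar⟩ := exists_factor p g₂.hom hpsurj (by
    intro x hx
    apply hker
    have : d10 x = 0 := congrArg Subtype.val hx
    exact this)
  -- the coboundary witnessing s • g₁
  change s • (Submodule.Quotient.mk ⟨g₁, hg₁⟩ : LinearMap.ker (homSC P N).g.hom ⧸ LinearMap.range (homSC P N).moduleCatToCycles) = 0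
  rw [← Submodule.Quotient.mk_smul, Submodule.Quotient.mk_eq_zero]
  refine ⟨ModuleCat.ofHom (gbar.comp f'), Subtype.ext ?_⟩
  show (homSC P N).f.hom (ModuleCat.ofHom (gbar.comp f')) = ((s • (⟨g₁, hg₁⟩ : LinearMap.ker (homSC P N).g.hom)) : _).1
  rw [homSC_f_apply]
  show (P.complex.d 1 0 ≫ ModuleCat.ofHom (gbar.comp f') : P.complex.X 1 ⟶ N) = s • g₂
  refine ModuleCat.hom_ext (LinearMap.ext fun x => ?_)
  show gbar (f' (d10 x)) = (s • g₂.hom) x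
  rw [LinearMap.smul_apply]
  have h1 : f' ((LinearMap.ker π0).subtype (p x)) = s • (p x) := hf' (p x)
  have h2 : (LinearMap.ker π0).subtype (p x) = d10 x := rfl
  rw [h2] at h1
  rw [h1, map_smul, hgbar]

/-- Construct `τ : ker π0 →ₗ A` with `f ∘ τ = ρ` on the kernel. -/
lemma exists_tau {A B X : Type u} [AddCommGroup A] [Module R A] [AddCommGroup B] [Module R B]
    [AddCommGroup X] [Module R X] {C' : Type u} [AddCommGroup C'] [Module R C']
    (f : A →ₗ[R] B) (g : B →ₗ[R] C') (hf : Function.Injective f)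
    (hfg : LinearMap.range f = LinearMap.ker g)
    (ρ : X →ₗ[R] B) (K : Submodule R X) (hK : ∀ k ∈ K, g (ρ k) = 0) :
    ∃ τ : K →ₗ[R] A, ∀ k : K, f (τ k) = ρ (k : X) := by
  let e := LinearEquiv.ofInjective f hf
  let σK : K →ₗ[R] LinearMap.range f :=
    LinearMap.codRestrict (LinearMap.range f) (ρ.comp K.subtype)
      (fun k => by rw [hfg]; exact hK k k.2)
  refine ⟨e.symm.toLinearMap.comp σK, fun k => ?_⟩
  show f (e.symm (σK k)) = _
  rw [← LinearEquiv.ofInjective_apply f (h := hf), LinearEquiv.apply_symm_apply]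
  rfl

/-- (1) ⇒ (3) : if every free module is u-S-semisimple, every SES is u-S-split. -/
lemma split_of_free
    (h1 : ∀ (M : Type u) [AddCommGroup M] [Module R M],
      Module.Free R M → IsUSSemisimple S M)
    (A B C' : Type u) [AddCommGroup A] [Module R A] [AddCommGroup B] [Module R B]
    [AddCommGroup C'] [Module R C'] (f : A →ₗ[R] B) (g : B →ₗ[R] C')
    (hf : Function.Injective f) (hg : Function.Surjective g)
    (hfg : LinearMap.range f = LinearMap.ker g) :
    ∃ s ∈ S, ∃ f' : B →ₗ[R] A, ∀ a : A, f' (f a) = s • a := by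
  classical
  let ρ : (B →₀ R) →ₗ[R] B := Finsupp.linearCombination R _root_.id
  have hρ : Function.Surjective ρ := fun b => ⟨Finsupp.single b 1, by simp [ρ]⟩
  let π0 : (B →₀ R) →ₗ[R] C' := g.comp ρ
  have hπ0 : Function.Surjective π0 := hg.comp hρ
  obtain ⟨s, hs, r, hr⟩ := h1 (B →₀ R) inferInstance (LinearMap.ker π0) C'
    (LinearMap.ker π0).subtype π0 (Submodule.injective_subtype _) hπ0
    (Submodule.range_subtype _)
  obtain ⟨τ, hτ⟩ := exists_tau f g hf hfg ρ (LinearMap.ker π0) (fun k hk => hk)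
  let h : (B →₀ R) →ₗ[R] A := τ.comp r
  have hvanish : LinearMap.ker ρ ≤ LinearMap.ker h := by
    intro x hx
    have hxK : x ∈ LinearMap.ker π0 := by
      show g (ρ x) = 0
      rw [hx, map_zero]
    have hrx : r x = s • (⟨x, hxK⟩ : LinearMap.ker π0) := hr ⟨x, hxK⟩
    show τ (r x) = 0
    rw [hrx, map_smul]
    have : f (τ ⟨x, hxK⟩) = 0 := by rw [hτ]; exact hx
    have h0 : τ (⟨x, hxK⟩ : LinearMap.ker π0) = 0 := hf (by rw [this, map_zero])
    rw [h0, smul_zero]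
  obtain ⟨f'', hf''⟩ := exists_factor ρ h hρ hvanish
  refine ⟨s, hs, f'', fun a => ?_⟩
  obtain ⟨y, hy⟩ := hρ (f a)
  have hyK : y ∈ LinearMap.ker π0 := by
    show g (ρ y) = 0
    rw [hy, ← LinearMap.mem_ker, ← hfg]
    exact LinearMap.mem_range_self f a
  have hry : r y = s • (⟨y, hyK⟩ : LinearMap.ker π0) := hr ⟨y, hyK⟩
  have hτy : τ (⟨y, hyK⟩ : LinearMap.ker π0) = a := by
    apply hf
    rw [hτ]
    exact hy
  calc f'' (f a) = f'' (ρ y) := by rw [hy]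
    _ = h y := hf'' y
    _ = τ (r y) := rfl
    _ = s • a := by rw [hry, map_smul, hτy]

/-- (4) ⇒ (3) : if Ext¹ is always u-S-torsion, every SES is u-S-split. -/
lemma split_of_ext_torsion
    (h4 : ∀ M N : ModuleCat.{u} R, ∃ s ∈ S, ∀ x : ext R 1 M N, s • x = 0)
    (A B C' : Type u) [AddCommGroup A] [Module R A] [AddCommGroup B] [Module R B]
    [AddCommGroup C'] [Module R C'] (f : A →ₗ[R] B) (g : B →ₗ[R] C')
    (hf : Function.Injective f) (hg : Function.Surjective g)
    (hfg : LinearMap.range f = LinearMap.ker g) :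
    ∃ s ∈ S, ∃ f' : B →ₗ[R] A, ∀ a : A, f' (f a) = s • a := by
  let MB := ModuleCat.of R B
  let MC := ModuleCat.of R C'
  let MA := ModuleCat.of R A
  let gM : MB ⟶ MC := ModuleCat.ofHom g
  have hgepi : Epi gM := (ModuleCat.epi_iff_surjective gM).2 hg
  let ρc : Projective.over MB ⟶ MB := Projective.π MB
  let π' : Projective.over MB ⟶ MC := ρc ≫ gM
  have : Epi π' := epi_comp _ _
  let P : ProjectiveResolution MC := of' π'
  set d10 : P.complex.X 1 →ₗ[R] P.complex.X 0 := (P.complex.d 1 0).hom with hd10def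
  set π0 : P.complex.X 0 →ₗ[R] MC := (P.π.f 0).hom with hπ0def
  have hπ0 : π0 = π'.hom := congrArg ModuleCat.Hom.hom (of'_π_f_0 π')
  let ρ : P.complex.X 0 →ₗ[R] B := (ρc : Projective.over MB ⟶ MB).hom
  have hρc : Function.Surjective ρc := by
    rw [← ModuleCat.epi_iff_surjective]
    infer_instance
  have hρ : Function.Surjective ρ := hρc
  have hπ0x : ∀ x : P.complex.X 0, π0 x = g (ρ x) := by
    intro x
    rw [hπ0]
    rfl
  have hrk : LinearMap.range d10 = LinearMap.ker π0 := P.exact₀.moduleCat_range_eq_ker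
  -- τ : ker π0 → A
  obtain ⟨τ, hτ⟩ := exists_tau f g hf hfg ρ (LinearMap.ker π0)
    (fun k hk => by rw [← hπ0x]; exact hk)
  -- corestriction of d10 onto ker π0
  let p : P.complex.X 1 →ₗ[R] LinearMap.ker π0 :=
    LinearMap.codRestrict (LinearMap.ker π0) d10
      (fun x => hrk ▸ LinearMap.mem_range_self d10 x)
  -- the cocycle
  let g₁ : P.complex.X 1 ⟶ MA := ModuleCat.ofHom (τ.comp p)
  have hg₁ : g₁ ∈ LinearMap.ker (homSC P MA).g.hom := by
    show (homSC P MA).g.hom g₁ = 0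
    rw [homSC_g_apply]
    refine ModuleCat.hom_ext (LinearMap.ext fun x => ?_)
    show τ (p (P.complex.d 2 1 x)) = 0
    have hdd : d10 (P.complex.d 2 1 x) = 0 := by
      have h0 : (P.complex.d 2 1 ≫ P.complex.d 1 0 : P.complex.X 2 ⟶ P.complex.X 0) = 0 :=
        P.complex.d_comp_d 2 1 0
      exact ConcreteCategory.congr_hom h0 x
    have hp0 : p (P.complex.d 2 1 x) = 0 := Subtype.ext hdd
    rw [hp0, map_zero]
  -- torsion of Ext¹(C', A) kills the class of g₁
  obtain ⟨s, hs, htor⟩ := h4 MC MA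
  have htor' : ∀ z : (homSC P MA).moduleCatLeftHomologyData.H, s • z = 0 :=
    torsion_of_iso (extIso P MA).symm s htor
  have hz := htor' (Submodule.Quotient.mk ⟨g₁, hg₁⟩)
  change s • (Submodule.Quotient.mk ⟨g₁, hg₁⟩ : LinearMap.ker (homSC P MA).g.hom ⧸ LinearMap.range (homSC P MA).moduleCatToCycles) = 0 at hz
  rw [← Submodule.Quotient.mk_smul, Submodule.Quotient.mk_eq_zero] at hz
  obtain ⟨h, hh⟩ := hz
  let h₂ : P.complex.X 0 ⟶ MA := h
  have hhval : ∀ x : P.complex.X 1, h₂ (d10 x) = s • τ (p x) := by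
    have h1 : (homSC P MA).f.hom h₂ = (s • (⟨g₁, hg₁⟩ : LinearMap.ker (homSC P MA).g.hom)).1 :=
      congrArg Subtype.val hh
    rw [homSC_f_apply] at h1
    intro x
    have h2 := ConcreteCategory.congr_hom
      (show (P.complex.d 1 0 ≫ h₂ : P.complex.X 1 ⟶ MA) = s • g₁ from h1) x
    change _ = s • τ (p x) at h2
    exact h2
  -- h vanishes on ker ρ
  have hvanish : LinearMap.ker ρ ≤ LinearMap.ker h₂.hom := by
    intro x hx
    have hx' : ρ x = 0 := hx
    have hxK : x ∈ LinearMap.ker π0 := by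
      show π0 x = 0
      rw [hπ0x, hx', map_zero]
    rw [← hrk] at hxK
    obtain ⟨y, rfl⟩ := hxK
    show h₂ (d10 y) = 0
    rw [hhval]
    have hfτ : f (τ (p y)) = 0 := by
      rw [hτ]
      exact hx'
    have : τ (p y) = 0 := hf (by rw [hfτ, map_zero])
    rw [this, smul_zero]
  obtain ⟨f'', hf''⟩ := exists_factor ρ h₂.hom hρ hvanish
  refine ⟨s, hs, f'', fun a => ?_⟩
  obtain ⟨x, hx⟩ := hρ (f a)
  have hxK : x ∈ LinearMap.ker π0 := by
    have hfa : f a ∈ LinearMap.ker g := hfg ▸ LinearMap.mem_range_self f a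
    show π0 x = 0
    rw [hπ0x, hx]
    exact hfa
  rw [← hrk] at hxK
  obtain ⟨y, rfl⟩ := hxK
  have hτy : τ (p y) = a := by
    apply hf
    rw [hτ]
    exact hx
  calc f'' (f a) = f'' (ρ (d10 y)) := by rw [hx]
    _ = h₂ (d10 y) := hf'' (d10 y)
    _ = s • τ (p y) := hhval y
    _ = s • a := by rw [hτy]

end

end USSAux

/-- characterizations of `u`-`S`-semisimple rings. -/
theorem uS_semisimple_ring_tfae
    {R : Type u} [CommRing R] (S : Submonoid R) :
    List.TFAE
      [ -- (1) every free R-module is u-S-semisimple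
        ∀ (M : Type u) [AddCommGroup M] [Module R M],
          Module.Free R M → IsUSSemisimple S M,
        -- (2) every R-module is u-S-semisimple
        ∀ (M : Type u) [AddCommGroup M] [Module R M], IsUSSemisimple S M,
        -- (3) every short exact sequence is u-S-split
        ∀ (A B C : Type u) [AddCommGroup A] [Module R A] [AddCommGroup B] [Module R B]
          [AddCommGroup C] [Module R C] (f : A →ₗ[R] B) (g : B →ₗ[R] C),
          Function.Injective f → Function.Surjective g →
          LinearMap.range f = LinearMap.ker g →
          ∃ s ∈ S, ∃ f' : B →ₗ[R] A, ∀ a : A, f' (f a) = s • a,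
        -- (4) Ext¹(M, N) is u-S-torsion for all M, N
        ∀ M N : ModuleCat.{u} R, IsUSTorsionMod S (ext R 1 M N),
        -- (5) every R-module is u-S-projective
        ∀ (M : Type u) [AddCommGroup M] [Module R M], IsUSProjective S M,
        -- (6) every R-module is u-S-injective
        ∀ (M : Type u) [AddCommGroup M] [Module R M], IsUSInjective S M ] := by
  tfae_have 1 → 3 := USSAux.split_of_free S
  tfae_have 3 → 2 := by
    intro h3 M _ _ L N _ _ _ _ f g hf hg hfg
    exact h3 L M N f g hf hg hfg
  tfae_have 2 → 1 := by
    intro h2 M _ _ _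
    exact h2 M
  tfae_have 3 → 4 := fun h3 M N => USSAux.ext_torsion_of_split S h3 M N
  tfae_have 4 → 3 := fun h4 => USSAux.split_of_ext_torsion S h4
  tfae_have 4 → 5 := by
    intro h4 M _ _ N
    exact h4 (ModuleCat.of R M) N
  tfae_have 5 → 4 := by
    intro h5 M N
    exact h5 M.carrier N
  tfae_have 4 → 6 := by
    intro h4 M _ _ N
    exact h4 N (ModuleCat.of R M)
  tfae_have 6 → 4 := by
    intro h6 M N
    exact h6 N.carrier M
  tfae_finish
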